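/- arXiv:1205.0416 — 2 statements merged into one kernel-verified Lean document; each statement's English description precedes it below -/
import Mathlib

section
/- Let N ≥ 2 and n ≥ 2 be integers. The image of SL_N(ℤ[1/n]) under the diagonal embedding into the topological group SL_N(ℝ) × ∏_{p | n} SL_N(ℚ_p) (the product taken over the prime divisors p of n, with the embedding induced by the ring inclusions ℤ[1/n] ⊂ ℝ and ℤ[1/n] ⊂ ℚ_p) is a discrete subgroup. -/
/-- the subring `ℤ[1/n]` of `ℚ`, as a set -/
def zInv (n : ℕ) : Set ℚ := {x : ℚ | ∃ (m : ℤ) (k : ℕ), x = (m : ℚ) / (n : ℚ) ^ k}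

/-- If a prime `p` divides the denominator of `q`, then the `p`-adic norm of `q`
exceeds `1`. -/
lemma one_lt_padicNorm_of_dvd_den {p : ℕ} (hp : p.Prime) {q : ℚ} (hd : p ∣ q.den) :
    1 < padicNorm p q := by
  haveI : Fact p.Prime := ⟨hp⟩
  have hq : q ≠ 0 := by
    rintro rfl
    exact hp.one_lt.ne' (Nat.dvd_one.mp hd)
  rw [padicNorm.eq_zpow_of_nonzero hq]
  have hnum : ¬ (p : ℤ) ∣ q.num := by
    intro hcon
    have h1 : p ∣ q.num.natAbs := Int.natCast_dvd.mp hcon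
    have := Nat.dvd_gcd h1 hd
    rw [Nat.Coprime.gcd_eq_one q.reduced] at this
    exact hp.one_lt.ne' (Nat.dvd_one.mp this)
  have h1 : padicValInt p q.num = 0 := padicValInt.eq_zero_of_not_dvd hnum
  have h2 : 1 ≤ padicValNat p q.den :=
    one_le_padicValNat_of_dvd q.pos.ne' hd
  have hv : padicValRat p q < 0 := by
    rw [padicValRat_def, h1]
    omega
  have hp1 : (1 : ℚ) < (p : ℚ) := by exact_mod_cast hp.one_lt
  calc (1 : ℚ) = (p : ℚ) ^ (0 : ℤ) := (zpow_zero _).symm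
    _ < (p : ℚ) ^ (-padicValRat p q) := zpow_lt_zpow_right₀ hp1 (by omega)

/-- A rational whose denominator divides a power of `n`, whose `p`-adic norm
is `< 1` for each prime `p ∣ n`, and whose absolute value is `< 1`, is zero. -/
lemma rat_eq_zero_of_small {n : ℕ} (hn : 2 ≤ n) {q : ℚ} {K : ℕ}
    (hden : (q.den : ℤ) ∣ (n : ℤ) ^ K)
    (hpad : ∀ p : ℕ, p.Prime → p ∣ n → padicNorm p q < 1)
    (habs : |q| < 1) : q = 0 := by
  have hden1 : q.den = 1 := by
    by_contra h
    obtain ⟨p, hp, hpd⟩ := Nat.exists_prime_and_dvd h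
    have hdvd : q.den ∣ n ^ K := by exact_mod_cast hden
    have hpn : p ∣ n := hp.dvd_of_dvd_pow (hpd.trans hdvd)
    exact absurd (hpad p hp hpn) (not_lt.mpr (one_lt_padicNorm_of_dvd_den hp hpd).le)
  have hq : (q.num : ℚ) = q := Rat.coe_int_num_of_den_eq_one hden1
  have h1 : |q.num| < 1 := by
    have : |(q.num : ℚ)| < 1 := by rw [hq]; exact habs
    exact_mod_cast this
  have : q.num = 0 := by have := abs_lt.mp h1; omega
  exact Rat.num_eq_zero.mp this

/-- The difference of two elements of `ℤ[1/n]` has denominator dividing a power of `n`. -/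
lemma zInv_sub_den_dvd {n : ℕ} (hn : 2 ≤ n) {a b : ℚ} (ha : a ∈ zInv n) (hb : b ∈ zInv n) :
    ∃ K : ℕ, ((a - b).den : ℤ) ∣ (n : ℤ) ^ K := by
  obtain ⟨m1, k1, rfl⟩ := ha
  obtain ⟨m2, k2, rfl⟩ := hb
  refine ⟨k1 + k2, ?_⟩
  have hn0 : (n : ℚ) ≠ 0 := Nat.cast_ne_zero.mpr (by omega)
  have heq : (m1 : ℚ) / (n : ℚ) ^ k1 - (m2 : ℚ) / (n : ℚ) ^ k2 =
      ((m1 * (n : ℤ) ^ k2 - m2 * (n : ℤ) ^ k1 : ℤ) : ℚ) / (((n : ℤ) ^ (k1 + k2) : ℤ) : ℚ) := by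
    push_cast
    field_simp
    ring
  rw [heq, ← Rat.divInt_eq_div]
  exact Rat.den_dvd _ _

/-- The diagonal copy of `SL_N(ℤ[1/n])` in
`SL_N(ℝ) × ∏_{p ∣ n} SL_N(ℚ_p)` is discrete. (Discreteness of a subset of the
subgroup is equivalent to its discreteness in the ambient product of matrix spaces,
since the subspace topology is transitive.) -/
theorem statement3 (N n : ℕ) (hN : 2 ≤ N) (hn : 2 ≤ n) :
    DiscreteTopology
      ({x : Matrix (Fin N) (Fin N) ℝ ×
          ((p : n.primeFactors) → Matrix (Fin N) (Fin N)
            (@Padic p.1 ⟨Nat.prime_of_mem_primeFactors p.2⟩)) |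
        ∃ γ : Matrix (Fin N) (Fin N) ℚ, γ.det = 1 ∧ (∀ i j, γ i j ∈ zInv n) ∧
          x.1 = γ.map (fun a => (a : ℝ)) ∧
          ∀ p : n.primeFactors,
            x.2 p = γ.map (fun a => (a : @Padic p.1 ⟨Nat.prime_of_mem_primeFactors p.2⟩))} :
        Set _) := by
  set S : Set (Matrix (Fin N) (Fin N) ℝ ×
      ((p : n.primeFactors) → Matrix (Fin N) (Fin N)
        (@Padic p.1 ⟨Nat.prime_of_mem_primeFactors p.2⟩))) :=
    {x | ∃ γ : Matrix (Fin N) (Fin N) ℚ, γ.det = 1 ∧ (∀ i j, γ i j ∈ zInv n) ∧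
        x.1 = γ.map (fun a => (a : ℝ)) ∧
        ∀ p : n.primeFactors,
          x.2 p = γ.map (fun a => (a : @Padic p.1 ⟨Nat.prime_of_mem_primeFactors p.2⟩))}
    with hS
  refine discreteTopology_iff_isOpen_singleton.mpr ?_
  rintro ⟨x, hx⟩
  obtain ⟨γ₀, hdet₀, hz₀, hx1, hx2⟩ := hx
  -- the open neighborhood
  set U : Set (Matrix (Fin N) (Fin N) ℝ ×
      ((p : n.primeFactors) → Matrix (Fin N) (Fin N)
        (@Padic p.1 ⟨Nat.prime_of_mem_primeFactors p.2⟩))) :=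
    (⋂ i, ⋂ j, (fun y : Matrix (Fin N) (Fin N) ℝ ×
        ((p : n.primeFactors) → Matrix (Fin N) (Fin N)
          (@Padic p.1 ⟨Nat.prime_of_mem_primeFactors p.2⟩)) => y.1 i j) ⁻¹'
        Metric.ball (x.1 i j) 1) ∩
    (⋂ p : n.primeFactors, ⋂ i, ⋂ j, (fun y : Matrix (Fin N) (Fin N) ℝ ×
        ((p : n.primeFactors) → Matrix (Fin N) (Fin N)
          (@Padic p.1 ⟨Nat.prime_of_mem_primeFactors p.2⟩)) => y.2 p i j) ⁻¹'
        Metric.ball (x.2 p i j) 1) with hU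
  have hUopen : IsOpen U := by
    refine IsOpen.inter ?_ ?_
    · exact isOpen_iInter_of_finite fun i => isOpen_iInter_of_finite fun j =>
        Metric.isOpen_ball.preimage (continuous_fst.matrix_elem i j)
    · exact isOpen_iInter_of_finite fun p => isOpen_iInter_of_finite fun i =>
        isOpen_iInter_of_finite fun j =>
        Metric.isOpen_ball.preimage (((continuous_apply p).comp continuous_snd).matrix_elem i j)
  -- the key claim: any element of S in U equals x
  have hkey : ∀ y ∈ S, y ∈ U → y = x := by
    rintro y ⟨γ, hdet, hz, hy1, hy2⟩ hyU
    obtain ⟨hyU1, hyU2⟩ := hyU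
    have hentry : ∀ i j, γ i j = γ₀ i j := by
      intro i j
      set d : ℚ := γ i j - γ₀ i j with hd
      -- real bound
      have hr : |d| < 1 := by
        have h1 := Set.mem_iInter.mp (Set.mem_iInter.mp hyU1 i) j
        simp only [Set.mem_preimage, Metric.mem_ball, Real.dist_eq] at h1
        rw [hy1, hx1] at h1
        simp only [Matrix.map_apply] at h1
        have : |((d : ℚ) : ℝ)| < 1 := by
          rw [hd]
          push_cast
          exact h1
        exact_mod_cast this
      -- p-adic bounds
      have hpad : ∀ p : ℕ, p.Prime → p ∣ n → padicNorm p d < 1 := by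
        intro p hp hpd
        haveI : Fact p.Prime := ⟨hp⟩
        have hmem : p ∈ n.primeFactors := Nat.mem_primeFactors.mpr ⟨hp, hpd, by omega⟩
        have h1 := Set.mem_iInter.mp (Set.mem_iInter.mp
          (Set.mem_iInter.mp hyU2 ⟨p, hmem⟩) i) j
        simp only [Set.mem_preimage, Metric.mem_ball, dist_eq_norm] at h1
        rw [hy2 ⟨p, hmem⟩, hx2 ⟨p, hmem⟩] at h1
        simp only [Matrix.map_apply] at h1
        have h2 : ‖((d : ℚ) : ℚ_[p])‖ < 1 := by
          rw [hd, Padic.coe_sub]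
          exact h1
        rw [Padic.eq_padicNorm] at h2
        exact_mod_cast h2
      obtain ⟨K, hK⟩ := zInv_sub_den_dvd hn (hz i j) (hz₀ i j)
      have : d = 0 := rat_eq_zero_of_small hn hK hpad hr
      linarith [sub_eq_zero.mp this, hd ▸ this]
    have hγ : γ = γ₀ := by
      ext i j
      exact hentry i j
    refine Prod.ext ?_ ?_
    · rw [hy1, hx1, hγ]
    · funext p
      rw [hy2 p, hx2 p, hγ]
  -- conclude
  have hxS : x ∈ S := ⟨γ₀, hdet₀, hz₀, hx1, hx2⟩
  have hxU : x ∈ U := by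
    constructor
    · refine Set.mem_iInter.mpr fun i => Set.mem_iInter.mpr fun j => ?_
      simp [Metric.mem_ball]
    · refine Set.mem_iInter.mpr fun p => Set.mem_iInter.mpr fun i =>
        Set.mem_iInter.mpr fun j => ?_
      simp [Metric.mem_ball]
  have heq : (Subtype.val ⁻¹' U : Set S) = {⟨x, hxS⟩} := by
    ext ⟨y, hyS⟩
    simp only [Set.mem_preimage, Set.mem_singleton_iff, Subtype.mk.injEq]
    exact ⟨fun h => hkey y hyS h, fun h => h ▸ hxU⟩
  have : IsOpen (Subtype.val ⁻¹' U : Set S) := hUopen.preimage continuous_subtype_val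
  rw [heq] at this
  exact this
end

section
/- Let N ≥ 2, and for each prime p let μ_p be the Haar measure on SL_N(ℚ_p) normalized so that μ_p(SL_N(ℤ_p)) = 1. There exist a constant a > 0 and a finite set S of primes such that for every prime p ∉ S and every integer k ≥ 0, μ_p({g ∈ SL_N(ℚ_p) : max_{i,j} |g_{ij}|_p = p^k}) ≥ p^{ak}. -/
open MeasureTheory

instance {m n α : Type*} [MeasurableSpace α] : MeasurableSpace (Matrix m n α) :=
  inferInstanceAs (MeasurableSpace (m → n → α))

noncomputable instance (p : ℕ) [Fact p.Prime] : MeasurableSpace ℚ_[p] := borel _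

/-- the maximum of the norms of the entries of a matrix -/
noncomputable def matSupNorm {N : ℕ} {K : Type*} [NormedField K]
    (g : Matrix (Fin N) (Fin N) K) : ℝ :=
  ⨆ ij : Fin N × Fin N, ‖g ij.1 ij.2‖

/-- `μ` is a Haar measure on `SL_N(K)`, viewed as a measure on the ambient matrix
space supported on `{det = 1}`. -/
def IsHaarOnSL {N : ℕ} {K : Type*} [NormedField K] [MeasurableSpace K]
    (μ : Measure (Matrix (Fin N) (Fin N) K)) : Prop :=
  μ {x | x.det ≠ 1} = 0 ∧
  (∀ g : Matrix (Fin N) (Fin N) K, g.det = 1 →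
    ∀ A : Set (Matrix (Fin N) (Fin N) K), MeasurableSet A →
      μ ((fun x => g * x) ⁻¹' A) = μ A) ∧
  (∀ U : Set (Matrix (Fin N) (Fin N) K), IsOpen U →
    (U ∩ {x | x.det = 1}).Nonempty → 0 < μ U) ∧
  (∀ C : Set (Matrix (Fin N) (Fin N) K), IsCompact C → μ C < ⊤)

section Aux

variable {p : ℕ} [Fact p.Prime] {N : ℕ}

/-- ultrametric bound for determinants: if all entries have norm at most 1, and the
entries of row `i` have norm at most `C`, then `‖det‖ ≤ C`. -/
lemma s9_det_norm_le {A : Matrix (Fin N) (Fin N) ℚ_[p]} {C : ℝ} (hC : 0 ≤ C) (i : Fin N)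
    (hrow : ∀ j, ‖A i j‖ ≤ C) (hall : ∀ i j, ‖A i j‖ ≤ 1) : ‖A.det‖ ≤ C := by
  rw [Matrix.det_apply]
  refine IsUltrametricDist.norm_sum_le_of_forall_le_of_nonneg hC ?_
  intro σ _
  have key : ‖∏ x, A (σ x) x‖ ≤ C := by
    rw [norm_prod, ← Finset.mul_prod_erase _ _ (Finset.mem_univ (σ⁻¹ i))]
    have h1 : ‖A (σ (σ⁻¹ i)) (σ⁻¹ i)‖ ≤ C := by simpa using hrow (σ⁻¹ i)
    have h2 : ∏ x ∈ Finset.univ.erase (σ⁻¹ i), ‖A (σ x) x‖ ≤ 1 :=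
      Finset.prod_le_one (fun x _ => norm_nonneg _) (fun x _ => hall _ _)
    calc ‖A (σ (σ⁻¹ i)) (σ⁻¹ i)‖ * ∏ x ∈ Finset.univ.erase (σ⁻¹ i), ‖A (σ x) x‖
        ≤ C * 1 := mul_le_mul h1 h2 (Finset.prod_nonneg fun x _ => norm_nonneg _) hC
      _ = C := mul_one C
  rcases Int.units_eq_one_or (Equiv.Perm.sign σ) with h | h <;> rw [h] <;>
    simpa using key

/-- every row of a matrix in `SL_N(ℤ_p)` has an entry of norm one. -/
lemma s9_exists_row_unit {A : Matrix (Fin N) (Fin N) ℚ_[p]} (hd : A.det = 1)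
    (hall : ∀ i j, ‖A i j‖ ≤ 1) (i : Fin N) : ∃ j, ‖A i j‖ = 1 := by
  have hne : (Finset.univ : Finset (Fin N)).Nonempty := ⟨i, Finset.mem_univ i⟩
  obtain ⟨j₀, -, hj₀⟩ := Finset.exists_max_image Finset.univ (fun j => ‖A i j‖) hne
  have h1 : ‖A.det‖ ≤ ‖A i j₀‖ :=
    s9_det_norm_le (norm_nonneg _) i (fun j => hj₀ j (Finset.mem_univ j)) hall
  rw [hd, norm_one] at h1
  exact ⟨j₀, le_antisymm (hall i j₀) h1⟩

/-- the lower-triangular matrix `diag(p^{-k}, p^k, 1, …, 1)` with an extra entry `t`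
in position `(1,0)`. -/
noncomputable def s9mat (p : ℕ) [Fact p.Prime] (N k t : ℕ) :
    Matrix (Fin N) (Fin N) ℚ_[p] :=
  Matrix.of fun i j =>
    if (i : ℕ) = 0 ∧ (j : ℕ) = 0 then (p : ℚ_[p]) ^ (-(k : ℤ))
    else if (i : ℕ) = 1 ∧ (j : ℕ) = 1 then (p : ℚ_[p]) ^ (k : ℕ)
    else if (i : ℕ) = 1 ∧ (j : ℕ) = 0 then (t : ℚ_[p])
    else if i = j then 1 else 0

lemma s9mat_lowerTriangular (k t : ℕ) :
    (s9mat p N k t).BlockTriangular ⇑OrderDual.toDual := by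
  intro i j hij
  have hij' : (i : ℕ) < (j : ℕ) := hij
  simp only [s9mat, Matrix.of_apply]
  split_ifs with h1 h2 h3 h4
  · omega
  · omega
  · omega
  · exact absurd (congrArg Fin.val h4) (by omega)
  · rfl

lemma s9mat_det (hN : 2 ≤ N) (k t : ℕ) : (s9mat p N k t).det = 1 := by
  have hp0 : (p : ℚ_[p]) ≠ 0 := by
    exact_mod_cast (Fact.out : p.Prime).ne_zero
  rw [Matrix.det_of_lowerTriangular _ (s9mat_lowerTriangular k t)]
  have h01 : (⟨0, by omega⟩ : Fin N) ≠ ⟨1, by omega⟩ := Fin.ne_of_val_ne (by simp)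
  rw [Fintype.prod_eq_mul (⟨0, by omega⟩ : Fin N) ⟨1, by omega⟩ h01 ?_]
  · have e0 : s9mat p N k t ⟨0, by omega⟩ ⟨0, by omega⟩ = (p : ℚ_[p]) ^ (-(k : ℤ)) := by
      simp [s9mat]
    have e1 : s9mat p N k t ⟨1, by omega⟩ ⟨1, by omega⟩ = (p : ℚ_[p]) ^ (k : ℕ) := by
      simp [s9mat]
    rw [e0, e1, ← zpow_natCast (p : ℚ_[p]) k, ← zpow_add₀ hp0]
    simp
  · intro x hx
    have hx0 : (x : ℕ) ≠ 0 := fun h => hx.1 (Fin.ext (by simpa using h))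
    have hx1 : (x : ℕ) ≠ 1 := fun h => hx.2 (Fin.ext (by simpa using h))
    simp [s9mat, hx0, hx1]

lemma s9mat_mul_apply_zero (hN : 2 ≤ N) (k t : ℕ) (u : Matrix (Fin N) (Fin N) ℚ_[p])
    {i : Fin N} (hi : (i : ℕ) = 0) (j : Fin N) :
    (s9mat p N k t * u) i j = (p : ℚ_[p]) ^ (-(k : ℤ)) * u i j := by
  rw [Matrix.mul_apply, Finset.sum_eq_single i]
  · simp [s9mat, hi]
  · intro l _ hl
    have hl' : (l : ℕ) ≠ 0 := fun h => hl (Fin.ext (by omega))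
    have : s9mat p N k t i l = 0 := by
      simp only [s9mat, Matrix.of_apply]
      split_ifs with h1 h2 h3 h4
      · omega
      · omega
      · omega
      · exact absurd (congrArg Fin.val h4) (by omega)
      · rfl
    rw [this, zero_mul]
  · simp

lemma s9mat_mul_apply_one (k t : ℕ) (u : Matrix (Fin N) (Fin N) ℚ_[p])
    {i i' : Fin N} (hi : (i : ℕ) = 1) (hi' : (i' : ℕ) = 0) (j : Fin N) :
    (s9mat p N k t * u) i j
      = (t : ℚ_[p]) * u i' j + (p : ℚ_[p]) ^ (k : ℕ) * u i j := by
  rw [Matrix.mul_apply, Fintype.sum_eq_add i' i ?_ ?_]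
  · congr 2
    · simp [s9mat, hi, hi']
    · simp [s9mat, hi]
  · exact Fin.ne_of_val_ne (by omega)
  · intro x hx
    have hx0 : (x : ℕ) ≠ 0 := fun h => hx.1 (Fin.ext (by omega))
    have hx1 : (x : ℕ) ≠ 1 := fun h => hx.2 (Fin.ext (by omega))
    have : s9mat p N k t i x = 0 := by
      simp only [s9mat, Matrix.of_apply]
      split_ifs with h1 h2 h3 h4
      · omega
      · omega
      · omega
      · exact absurd (congrArg Fin.val h4) (by omega)
      · rfl
    rw [this, zero_mul]

lemma s9mat_mul_apply_ge (k t : ℕ) (u : Matrix (Fin N) (Fin N) ℚ_[p])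
    {i : Fin N} (hi : 2 ≤ (i : ℕ)) (j : Fin N) :
    (s9mat p N k t * u) i j = u i j := by
  rw [Matrix.mul_apply, Finset.sum_eq_single i]
  · have : s9mat p N k t i i = 1 := by
      simp only [s9mat, Matrix.of_apply]
      split_ifs with h1 h2 h3
      · omega
      · omega
      · omega
      · rfl
    rw [this, one_mul]
  · intro l _ hl
    have hl' : (l : ℕ) ≠ (i : ℕ) := fun h => hl (Fin.ext (by omega))
    have : s9mat p N k t i l = 0 := by
      simp only [s9mat, Matrix.of_apply]
      split_ifs with h1 h2 h3 h4
      · omega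
      · omega
      · omega
      · exact absurd (congrArg Fin.val h4) (by omega)
      · rfl
    rw [this, zero_mul]
  · simp

end Aux

/-- With `μ_p` the Haar measure on `SL_N(ℚ_p)` normalized so that
`μ_p(SL_N(ℤ_p)) = 1`, there exist `a > 0` and a finite set `S` of primes such that
for all primes `p ∉ S` and all `k ≥ 0`,
`μ_p({g ∈ SL_N(ℚ_p) : max_{i,j}|g_{ij}|_p = p^k}) ≥ p^{a k}`. -/
theorem statement9 (N : ℕ) (hN : 2 ≤ N)
    (μ : (p : ℕ) → (hp : p.Prime) → Measure (Matrix (Fin N) (Fin N) (@Padic p ⟨hp⟩)))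
    (hHaar : ∀ p hp, IsHaarOnSL (μ p hp))
    (hnorm : ∀ p hp, μ p hp {g | g.det = 1 ∧ ∀ i j, ‖g i j‖ ≤ 1} = 1) :
    ∃ a : ℝ, 0 < a ∧ ∃ S : Finset ℕ,
      ∀ p : ℕ, (hp : p.Prime) → p ∉ S → ∀ k : ℕ,
        ENNReal.ofReal ((p : ℝ) ^ (a * k)) ≤
          μ p hp {g | g.det = 1 ∧ matSupNorm g = (p : ℝ) ^ k} := by
  refine ⟨1, one_pos, ∅, ?_⟩
  intro p hp _ k
  haveI : Fact p.Prime := ⟨hp⟩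
  haveI : BorelSpace ℚ_[p] := ⟨rfl⟩
  haveI : BorelSpace (Matrix (Fin N) (Fin N) ℚ_[p]) :=
    inferInstanceAs (BorelSpace (Fin N → Fin N → ℚ_[p]))
  have hp0 : (p : ℚ_[p]) ≠ 0 := by exact_mod_cast hp.ne_zero
  have hp1 : (1 : ℝ) ≤ (p : ℝ) := by exact_mod_cast hp.one_lt.le
  have hpk1 : (1 : ℝ) ≤ (p : ℝ) ^ k := one_le_pow₀ hp1
  obtain ⟨-, hinv, -, -⟩ := hHaar p hp
  set i0 : Fin N := ⟨0, by omega⟩ with hi0def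
  set i1 : Fin N := ⟨1, by omega⟩ with hi1def
  haveI : Nonempty (Fin N × Fin N) := ⟨(i0, i0)⟩
  set K : Set (Matrix (Fin N) (Fin N) ℚ_[p]) :=
    {g | g.det = 1 ∧ ∀ i j, ‖g i j‖ ≤ 1} with hKdef
  have hKmeas : MeasurableSet K := by
    have h1 : IsClosed {g : Matrix (Fin N) (Fin N) ℚ_[p] | g.det = 1} :=
      isClosed_eq (continuous_id.matrix_det) continuous_const
    have h2 : IsClosed {g : Matrix (Fin N) (Fin N) ℚ_[p] | ∀ i j, ‖g i j‖ ≤ 1} := by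
      have he : {g : Matrix (Fin N) (Fin N) ℚ_[p] | ∀ i j, ‖g i j‖ ≤ 1}
          = ⋂ i, ⋂ j, {g : Matrix (Fin N) (Fin N) ℚ_[p] | ‖g i j‖ ≤ 1} := by
        ext g; simp
      rw [he]
      exact isClosed_iInter fun i => isClosed_iInter fun j =>
        isClosed_le ((continuous_id.matrix_elem i j).norm) continuous_const
    have he : K = {g : Matrix (Fin N) (Fin N) ℚ_[p] | g.det = 1}
        ∩ {g : Matrix (Fin N) (Fin N) ℚ_[p] | ∀ i j, ‖g i j‖ ≤ 1} := rfl
    rw [he]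
    exact (h1.inter h2).measurableSet
  set A : ℕ → Set (Matrix (Fin N) (Fin N) ℚ_[p]) :=
    fun t => (fun x => s9mat p N k t * x) '' K with hA
  have hdet : ∀ t : ℕ, (s9mat p N k t).det = 1 := fun t => s9mat_det hN k t
  have hunit : ∀ t : ℕ, IsUnit (s9mat p N k t).det := fun t => (hdet t) ▸ isUnit_one
  have hApre : ∀ t, A t = (fun x => (s9mat p N k t)⁻¹ * x) ⁻¹' K := by
    intro t; ext x; constructor
    · rintro ⟨u, hu, rfl⟩
      simpa [Set.mem_preimage, ← Matrix.mul_assoc,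
        Matrix.nonsing_inv_mul _ (hunit t)] using hu
    · intro hx
      exact ⟨(s9mat p N k t)⁻¹ * x, hx, by
        show s9mat p N k t * ((s9mat p N k t)⁻¹ * x) = x
        rw [← Matrix.mul_assoc, Matrix.mul_nonsing_inv _ (hunit t), Matrix.one_mul]⟩
  have hAmeas : ∀ t, MeasurableSet (A t) := by
    intro t; rw [hApre]
    exact hKmeas.preimage (continuous_const.matrix_mul continuous_id).measurable
  have hmuA : ∀ t, μ p hp (A t) = 1 := by
    intro t
    have h1 := hinv (s9mat p N k t) (hdet t) (A t) (hAmeas t)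
    have h2 : (fun x => s9mat p N k t * x) ⁻¹' (A t) = K := by
      rw [hApre]; ext x
      simp [Set.mem_preimage, ← Matrix.mul_assoc, Matrix.nonsing_inv_mul _ (hunit t)]
    rw [h2] at h1
    rw [← h1]
    exact hnorm p hp
  have htle : ∀ t : ℕ, ‖(t : ℚ_[p])‖ ≤ 1 := by
    intro t
    have := Padic.norm_int_le_one (p := p) (t : ℤ)
    push_cast at this
    exact this
  have hsub : ∀ t : ℕ, A t ⊆ {g | g.det = 1 ∧ matSupNorm g = (p : ℝ) ^ k} := by
    rintro t x ⟨u, ⟨hudet, hule⟩, rfl⟩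
    refine ⟨by rw [Matrix.det_mul, hdet, hudet, one_mul], ?_⟩
    obtain ⟨j₀, hj₀⟩ := s9_exists_row_unit hudet hule i0
    have hub : ∀ ij : Fin N × Fin N,
        ‖(s9mat p N k t * u) ij.1 ij.2‖ ≤ (p : ℝ) ^ k := by
      rintro ⟨i, j⟩
      by_cases hi : (i : ℕ) = 0
      · rw [s9mat_mul_apply_zero hN k t u hi, norm_mul, Padic.norm_p_zpow,
          neg_neg, zpow_natCast]
        calc (p : ℝ) ^ k * ‖u i j‖ ≤ (p : ℝ) ^ k * 1 :=
              mul_le_mul_of_nonneg_left (hule i j) (by positivity)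
          _ = (p : ℝ) ^ k := mul_one _
      by_cases hi1 : (i : ℕ) = 1
      · rw [s9mat_mul_apply_one k t u hi1 (by simp [hi0def]) (i' := i0)]
        refine le_trans (Padic.nonarchimedean _ _) (max_le ?_ ?_)
        · calc ‖(t : ℚ_[p]) * u i0 j‖ = ‖(t : ℚ_[p])‖ * ‖u i0 j‖ := norm_mul _ _
            _ ≤ 1 * 1 := mul_le_mul (htle t) (hule i0 j) (norm_nonneg _) zero_le_one
            _ ≤ (p : ℝ) ^ k := by simpa using hpk1
        · calc ‖(p : ℚ_[p]) ^ (k : ℕ) * u i j‖ = ‖(p : ℚ_[p]) ^ (k : ℕ)‖ * ‖u i j‖ :=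
              norm_mul _ _
            _ ≤ 1 * 1 := by
              refine mul_le_mul ?_ (hule i j) (norm_nonneg _) zero_le_one
              rw [norm_pow, Padic.norm_p]
              exact pow_le_one₀ (by positivity) (inv_le_one_of_one_le₀ hp1)
            _ ≤ (p : ℝ) ^ k := by simpa using hpk1
      · have h2 : 2 ≤ (i : ℕ) := by omega
        rw [s9mat_mul_apply_ge k t u h2]
        exact (hule i j).trans hpk1
    have hlow : ‖(s9mat p N k t * u) i0 j₀‖ = (p : ℝ) ^ k := by
      rw [s9mat_mul_apply_zero hN k t u (by simp [hi0def]), norm_mul,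
        Padic.norm_p_zpow, neg_neg, zpow_natCast, hj₀, mul_one]
    show (⨆ ij : Fin N × Fin N, ‖(s9mat p N k t * u) ij.1 ij.2‖) = (p : ℝ) ^ k
    refine le_antisymm (ciSup_le hub) ?_
    calc (p : ℝ) ^ k = ‖(s9mat p N k t * u) i0 j₀‖ := hlow.symm
      _ ≤ ⨆ ij : Fin N × Fin N, ‖(s9mat p N k t * u) ij.1 ij.2‖ :=
        le_ciSup (f := fun ij : Fin N × Fin N => ‖(s9mat p N k t * u) ij.1 ij.2‖)
          (Set.finite_range _).bddAbove (i0, j₀)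
  have hdisj : Pairwise (Function.onFun Disjoint (fun t : Fin (p ^ k) => A t)) := by
    intro t s hts
    rw [Function.onFun, Set.disjoint_left]
    rintro x ⟨u, ⟨hudet, hule⟩, hxu⟩ ⟨v, ⟨hvdet, hvle⟩, hxv⟩
    have hxu' : s9mat p N k (t : ℕ) * u = x := hxu
    have hxv' : s9mat p N k (s : ℕ) * v = x := hxv
    obtain ⟨j₀, hj₀⟩ := s9_exists_row_unit hudet hule i0
    have e0 : u i0 j₀ = v i0 j₀ := by
      have h1 : (s9mat p N k t * u) i0 j₀ = (s9mat p N k s * v) i0 j₀ := by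
        rw [hxu', hxv']
      rw [s9mat_mul_apply_zero hN k t u (by simp [hi0def]),
        s9mat_mul_apply_zero hN k s v (by simp [hi0def])] at h1
      exact mul_left_cancel₀ (zpow_ne_zero _ hp0) h1
    have h1 : (s9mat p N k t * u) i1 j₀ = (s9mat p N k s * v) i1 j₀ := by
      rw [hxu', hxv']
    rw [s9mat_mul_apply_one k t u (by simp [hi1def]) (by simp [hi0def]) (i' := i0),
      s9mat_mul_apply_one k s v (by simp [hi1def]) (by simp [hi0def]) (i' := i0)] at h1
    have h2 : ((t : ℚ_[p]) - (s : ℚ_[p])) * u i0 j₀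
        = (p : ℚ_[p]) ^ (k : ℕ) * (v i1 j₀ - u i1 j₀) := by
      linear_combination h1 - ((s : ℕ) : ℚ_[p]) * e0
    have h3 : ‖(t : ℚ_[p]) - (s : ℚ_[p])‖ ≤ (p : ℝ) ^ (-(k : ℤ)) := by
      have hd : ‖v i1 j₀ - u i1 j₀‖ ≤ 1 := by
        have := Padic.nonarchimedean (v i1 j₀) (-(u i1 j₀))
        rw [← sub_eq_add_neg] at this
        refine this.trans (max_le (hvle i1 j₀) ?_)
        rw [norm_neg]; exact hule i1 j₀
      calc ‖(t : ℚ_[p]) - (s : ℚ_[p])‖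
          = ‖(t : ℚ_[p]) - (s : ℚ_[p])‖ * ‖u i0 j₀‖ := by rw [hj₀, mul_one]
        _ = ‖(p : ℚ_[p]) ^ (k : ℕ)‖ * ‖v i1 j₀ - u i1 j₀‖ := by
            rw [← norm_mul, ← norm_mul, h2]
        _ ≤ (p : ℝ) ^ (-(k : ℤ)) * 1 := by
            rw [Padic.norm_p_pow]
            exact mul_le_mul_of_nonneg_left hd (by positivity)
        _ = (p : ℝ) ^ (-(k : ℤ)) := mul_one _
    have h4 : ((p : ℤ) ^ k ∣ ((t : ℕ) : ℤ) - ((s : ℕ) : ℤ)) := by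
      rw [← Padic.norm_int_le_pow_iff_dvd]
      push_cast
      exact h3
    have h5 : ((t : ℕ) : ℤ) - ((s : ℕ) : ℤ) = 0 := by
      refine Int.eq_zero_of_abs_lt_dvd h4 ?_
      have ht' : (((t : ℕ) : ℤ)) < (p : ℤ) ^ k := by exact_mod_cast t.isLt
      have hs' : (((s : ℕ) : ℤ)) < (p : ℤ) ^ k := by exact_mod_cast s.isLt
      have ht0 : (0 : ℤ) ≤ ((t : ℕ) : ℤ) := Int.natCast_nonneg _
      have hs0 : (0 : ℤ) ≤ ((s : ℕ) : ℤ) := Int.natCast_nonneg _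
      rw [abs_lt]
      constructor <;> linarith
    exact hts (Fin.ext (by omega))
  have hUnion : μ p hp (⋃ t : Fin (p ^ k), A t) = ((p ^ k : ℕ) : ENNReal) := by
    rw [measure_iUnion hdisj (fun t => hAmeas t)]
    rw [tsum_eq_sum (s := Finset.univ) (by simp)]
    simp [hmuA]
  calc ENNReal.ofReal ((p : ℝ) ^ ((1 : ℝ) * k)) = ((p ^ k : ℕ) : ENNReal) := by
        rw [one_mul, Real.rpow_natCast]
        rw [show ((p : ℝ) ^ k) = ((p ^ k : ℕ) : ℝ) by push_cast; ring]
        exact ENNReal.ofReal_natCast _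
    _ = μ p hp (⋃ t : Fin (p ^ k), A t) := hUnion.symm
    _ ≤ μ p hp {g | g.det = 1 ∧ matSupNorm g = (p : ℝ) ^ k} :=
        measure_mono (Set.iUnion_subset fun t => hsub t)
end
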